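/- arXiv:1309.3104 — 2 statements merged into one kernel-verified Lean document; each statement's English description precedes it below -/
import Mathlib

section
/- Let q : [T₀, ∞) → ℝ² solve -q''(x) + ∇W(q(x)) = 0 with q(x) → a as x → ∞ and |q(x) - a| ≤ δ̄ for x ≥ T₀, where on the ball of radius 2δ̄ around a the Hessian satisfies ∇²W(ξ)η·η ≥ 2w|η|² for all η. Then |q(x) - a| ≤ δ̄ e^{-√(w/2)(x - T₀)} for all x ≥ T₀. -/
open Real Filter
open scoped RealInnerProductSpace

/-- exponential decay of heteroclinic solutions towards the
nondegenerate minimum `a` of the potential. -/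
theorem stmt_3 (W : EuclideanSpace ℝ (Fin 2) → ℝ)
    (gradW : EuclideanSpace ℝ (Fin 2) → EuclideanSpace ℝ (Fin 2))
    (HW : EuclideanSpace ℝ (Fin 2) →
      (EuclideanSpace ℝ (Fin 2)) →L[ℝ] (EuclideanSpace ℝ (Fin 2)))
    (a : EuclideanSpace ℝ (Fin 2)) (δ w T₀ : ℝ) (hδ : 0 < δ) (hw : 0 < w)
    (hWC : ContDiff ℝ 3 W) (hWa : W a = 0) (hgrada : gradW a = 0)
    (hgrad : ∀ ξ, HasGradientAt W (gradW ξ) ξ)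
    (hHW : ∀ ξ, HasFDerivAt gradW (HW ξ) ξ)
    (hhess : ∀ ξ, ‖ξ - a‖ ≤ 2 * δ → ∀ η : EuclideanSpace ℝ (Fin 2),
      (inner ℝ (HW ξ η) η : ℝ) ≥ 2 * w * ‖η‖ ^ 2)
    (q q' : ℝ → EuclideanSpace ℝ (Fin 2))
    (hq1 : ∀ x, HasDerivAt q (q' x) x)
    (hq2 : ∀ x, HasDerivAt q' (gradW (q x)) x)
    (hbd : ∀ x ≥ T₀, ‖q x - a‖ ≤ δ)
    (hlimq : Tendsto q atTop (nhds a))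
    (hlimq' : Tendsto q' atTop (nhds 0)) :
    ∀ x ≥ T₀, ‖q x - a‖ ≤ δ * Real.exp (-Real.sqrt (w / 2) * (x - T₀)) := by
  have hw2 : (0:ℝ) < w/2 := by linarith
  set μ : ℝ := Real.sqrt (w/2) with hμdef
  have hμpos : 0 < μ := Real.sqrt_pos.mpr hw2
  have hμsq : μ^2 = w/2 := Real.sq_sqrt hw2.le
  -- Step 1: convexity inequality for gradW near a
  have key : ∀ ξ : EuclideanSpace ℝ (Fin 2), ‖ξ - a‖ ≤ 2*δ →
      2*w*⟪ξ - a, ξ - a⟫ ≤ ⟪gradW ξ, ξ - a⟫ := by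
    intro ξ hξ
    set v : EuclideanSpace ℝ (Fin 2) := ξ - a with hv
    set φ : ℝ → ℝ := fun t => ⟪gradW (a + t • v), v⟫ - 2*w*⟪v,v⟫ * t with hφdef
    have hγ : ∀ t : ℝ, HasDerivAt (fun t : ℝ => a + t • v) v t := by
      intro t
      simpa using ((hasDerivAt_id t).smul_const v).const_add a
    have hφ : ∀ t : ℝ, HasDerivAt φ
        (⟪HW (a + t • v) v, v⟫ - 2*w*⟪v,v⟫) t := by
      intro t
      have h1 : HasDerivAt (fun t : ℝ => gradW (a + t • v)) (HW (a + t • v) v) t :=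
        (hHW _).comp_hasDerivAt t (hγ t)
      have h2 := (h1.inner ℝ (hasDerivAt_const t v)).sub
        ((hasDerivAt_id t).const_mul (2*w*⟪v,v⟫))
      simpa only [hφdef, inner_zero_right, zero_add, mul_one, Pi.sub_def, id_eq] using h2
    have hmono : MonotoneOn φ (Set.Icc (0:ℝ) 1) := by
      apply monotoneOn_of_hasDerivWithinAt_nonneg (convex_Icc 0 1)
        (fun t _ => (hφ t).continuousAt.continuousWithinAt)
        (fun t _ => (hφ t).hasDerivWithinAt)
      intro t ht
      rw [interior_Icc] at ht
      have hball : ‖(a + t • v) - a‖ ≤ 2*δ := by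
        have : (a + t • v) - a = t • v := by abel
        rw [this, norm_smul]
        have h01 : |t| ≤ 1 := by
          rw [abs_le]; constructor <;> [linarith [ht.1]; linarith [ht.2]]
        calc |t| * ‖v‖ ≤ 1 * ‖v‖ := by
              apply mul_le_mul_of_nonneg_right h01 (norm_nonneg _)
          _ = ‖v‖ := one_mul _
          _ ≤ 2*δ := hξ
      have := hhess _ hball v
      have hnv : ⟪v, v⟫ = ‖v‖^2 := real_inner_self_eq_norm_sq v
      simp only [sub_nonneg]
      rw [hnv]
      exact this
    have h0 : φ 0 = 0 := by
      simp only [hφdef, zero_smul, add_zero, hgrada, inner_zero_left, mul_zero, sub_zero]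
    have h1 : φ 1 = ⟪gradW ξ, v⟫ - 2*w*⟪v,v⟫ := by
      have hav : a + (1:ℝ) • v = ξ := by rw [one_smul, hv]; abel
      simp only [hφdef, hav, mul_one]
    have := hmono (Set.mem_Icc.mpr ⟨le_refl 0, zero_le_one⟩)
      (Set.mem_Icc.mpr ⟨zero_le_one, le_refl 1⟩) zero_le_one
    rw [h0, h1] at this
    linarith
  -- notation for scalar functions
  have hqa : ∀ x, HasDerivAt (fun x => q x - a) (q' x) x := fun x => (hq1 x).sub_const a
  set r : ℝ → ℝ := fun x => ⟪q x - a, q x - a⟫ with hrdef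
  set p : ℝ → ℝ := fun x => ⟪q' x, q x - a⟫ with hpdef
  set g : ℝ → ℝ := fun x => 2 * p x + 2*μ* r x with hgdef
  have hr : ∀ x, HasDerivAt r (2 * p x) x := by
    intro x
    have h : HasDerivAt r _ x := (hqa x).inner ℝ (hqa x)
    convert h using 1
    simp only [hpdef]
    rw [real_inner_comm (q x - a) (q' x)]
    ring
  have hp : ∀ x, HasDerivAt p (⟪q' x, q' x⟫ + ⟪gradW (q x), q x - a⟫) x :=
    fun x => (hq2 x).inner ℝ (hqa x)
  set g' : ℝ → ℝ :=
    fun x => 2*(⟪q' x, q' x⟫ + ⟪gradW (q x), q x - a⟫) + 2*μ*(2 * p x) with hg'def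
  have hg : ∀ x, HasDerivAt g (g' x) x :=
    fun x => ((hp x).const_mul 2).add ((hr x).const_mul (2*μ))
  have hrnn : ∀ x, 0 ≤ r x := fun x => real_inner_self_nonneg
  have hgineq : ∀ x, T₀ ≤ x → 2*μ*(g x) ≤ g' x := by
    intro x hx
    have hb : ‖q x - a‖ ≤ 2*δ := by linarith [hbd x hx]
    have h1 : 2*w*(r x) ≤ ⟪gradW (q x), q x - a⟫ := key (q x) hb
    have h2 : (0:ℝ) ≤ ⟪q' x, q' x⟫ := real_inner_self_nonneg
    have h3 := hrnn x
    have hμ2 : 2*μ*(2*μ) = 2*w := by linear_combination 4 * hμsq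
    simp only [hgdef, hg'def]
    nlinarith [h1, h2, h3]
  -- g tends to 0
  have hg0 : Tendsto g atTop (nhds 0) := by
    have hqa0 : Tendsto (fun x => q x - a) atTop (nhds 0) := by
      have h := hlimq.sub_const a
      rw [sub_self] at h
      exact h
    have hz : (inner ℝ (0:EuclideanSpace ℝ (Fin 2)) (0:EuclideanSpace ℝ (Fin 2)) : ℝ) = 0 := by
      simp
    have h1 : Tendsto p atTop (nhds 0) := by
      have h : Tendsto p atTop
          (nhds (inner ℝ (0:EuclideanSpace ℝ (Fin 2)) (0:EuclideanSpace ℝ (Fin 2)) : ℝ)) :=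
        hlimq'.inner hqa0
      rwa [hz] at h
    have h2 : Tendsto r atTop (nhds 0) := by
      have h : Tendsto r atTop
          (nhds (inner ℝ (0:EuclideanSpace ℝ (Fin 2)) (0:EuclideanSpace ℝ (Fin 2)) : ℝ)) :=
        hqa0.inner hqa0
      rwa [hz] at h
    have h3 := (h1.const_mul 2).add (h2.const_mul (2*μ))
    simp only [mul_zero, add_zero] at h3
    exact h3
  -- g ≤ 0 on [T₀, ∞)
  have hgle : ∀ x, T₀ ≤ x → g x ≤ 0 := by
    intro x₀ hx₀
    by_contra hpos
    push_neg at hpos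
    set E : ℝ → ℝ := fun x => Real.exp (-(2*μ)*x) with hEdef
    have hE : ∀ x, HasDerivAt E (Real.exp (-(2*μ)*x) * (-(2*μ))) x := by
      intro x
      have h := ((hasDerivAt_id x).const_mul (-(2*μ))).exp
      simpa only [mul_one, id_eq] using h
    have hEg : ∀ x, HasDerivAt (fun x => E x * g x)
        (Real.exp (-(2*μ)*x) * (-(2*μ)) * g x + E x * g' x) x :=
      fun x => (hE x).mul (hg x)
    have hmono : MonotoneOn (fun x => E x * g x) (Set.Ici x₀) := by
      apply monotoneOn_of_hasDerivWithinAt_nonneg (convex_Ici x₀)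
        (fun t _ => ((hE t).mul (hg t)).continuousAt.continuousWithinAt)
        (fun t _ => (hEg t).hasDerivWithinAt)
      intro t ht
      rw [interior_Ici] at ht
      have htT : T₀ ≤ t := le_trans hx₀ (le_of_lt ht)
      have h1 : 2*μ*(g t) ≤ g' t := hgineq t htT
      have hEpos : (0:ℝ) < Real.exp (-(2*μ)*t) := Real.exp_pos _
      have heq : Real.exp (-(2*μ)*t) * (-(2*μ)) * g t + E t * g' t
          = Real.exp (-(2*μ)*t) * (g' t - 2*μ*(g t)) := by
        simp only [hEdef]; ring
      rw [heq]
      exact mul_nonneg hEpos.le (by linarith)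
    -- eventually g x < g x₀, pick such x ≥ x₀
    have hev : ∀ᶠ x in atTop, g x < g x₀ := hg0.eventually (gt_mem_nhds hpos)
    obtain ⟨x, hxx₀, hlt⟩ := ((eventually_ge_atTop x₀).and hev).exists
    have hmle : E x₀ * g x₀ ≤ E x * g x :=
      hmono (Set.self_mem_Ici) (Set.mem_Ici.mpr hxx₀) hxx₀
    have hExle : E x ≤ E x₀ := by
      simp only [hEdef]
      apply Real.exp_le_exp.mpr
      nlinarith [hμpos]
    have hExpos : (0:ℝ) < E x := Real.exp_pos _
    have hge : g x₀ ≤ g x := by nlinarith [hExpos, hExle, hmle, hpos]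
    linarith
  -- Step: F x = exp(2μ x) * r x is antitone on [T₀, ∞)
  set F : ℝ → ℝ := fun x => Real.exp ((2*μ)*x) * r x with hFdef
  have hFd : ∀ x, HasDerivAt F (Real.exp ((2*μ)*x) * (2*μ) * r x
      + Real.exp ((2*μ)*x) * (2 * p x)) x := by
    intro x
    have hexp : HasDerivAt (fun x => Real.exp ((2*μ)*x)) (Real.exp ((2*μ)*x) * (2*μ)) x := by
      have h := ((hasDerivAt_id x).const_mul (2*μ)).exp
      simpa only [mul_one, id_eq] using h
    exact hexp.mul (hr x)
  have hFanti : AntitoneOn F (Set.Ici T₀) := by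
    apply antitoneOn_of_hasDerivWithinAt_nonpos (convex_Ici T₀)
      (fun t _ => (hFd t).continuousAt.continuousWithinAt)
      (fun t _ => (hFd t).hasDerivWithinAt)
    intro t ht
    rw [interior_Ici] at ht
    have hgt : g t ≤ 0 := hgle t ht.le
    have heq : Real.exp ((2*μ)*t) * (2*μ) * r t + Real.exp ((2*μ)*t) * (2 * p t)
        = Real.exp ((2*μ)*t) * g t := by
      simp only [hgdef]; ring
    rw [heq]
    exact mul_nonpos_of_nonneg_of_nonpos (Real.exp_pos _).le hgt
  -- conclude
  intro x hx
  have hFle : F x ≤ F T₀ := hFanti Set.self_mem_Ici (Set.mem_Ici.mpr hx) hx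
  have hrT : r T₀ ≤ δ^2 := by
    have := hbd T₀ le_rfl
    have hn : r T₀ = ‖q T₀ - a‖^2 := real_inner_self_eq_norm_sq _
    rw [hn]
    nlinarith [norm_nonneg (q T₀ - a)]
  have hEx : (0:ℝ) < Real.exp ((2*μ)*x) := Real.exp_pos _
  have hkey : ‖q x - a‖^2 ≤ (δ * Real.exp (-μ * (x - T₀)))^2 := by
    have hn : r x = ‖q x - a‖^2 := real_inner_self_eq_norm_sq _
    have h1 : Real.exp ((2*μ)*x) * r x ≤ Real.exp ((2*μ)*T₀) * δ^2 := by
      have : Real.exp ((2*μ)*T₀) * r T₀ ≤ Real.exp ((2*μ)*T₀) * δ^2 :=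
        mul_le_mul_of_nonneg_left hrT (Real.exp_pos _).le
      calc Real.exp ((2*μ)*x) * r x ≤ Real.exp ((2*μ)*T₀) * r T₀ := hFle
        _ ≤ Real.exp ((2*μ)*T₀) * δ^2 := this
    have he : Real.exp (-μ*(x-T₀))^2 = Real.exp ((2*μ)*T₀) / Real.exp ((2*μ)*x) := by
      rw [← Real.exp_sub, pow_two, ← Real.exp_add]
      congr 1
      ring
    have h2 : (δ * Real.exp (-μ * (x - T₀)))^2
        = δ^2 * (Real.exp ((2*μ)*T₀) / Real.exp ((2*μ)*x)) := by
      rw [mul_pow, he]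
    rw [← hn, h2, ← mul_div_assoc, le_div_iff₀ hEx, mul_comm]
    linarith [h1, mul_comm (δ^2) (Real.exp ((2*μ)*T₀))]
  have hpos2 : (0:ℝ) ≤ δ * Real.exp (-μ * (x - T₀)) := by positivity
  have := Real.sqrt_le_sqrt hkey
  rw [Real.sqrt_sq (norm_nonneg _), Real.sqrt_sq hpos2] at this
  exact this
end

section
/- Let v : ℝ → L²(ℝ)² be weakly differentiable with ‖v(y₁) - v(y₀)‖_{L²} ≤ √(2 E |y₁ - y₀|) for all y₀ < y₁ (with E the renormalized energy), and suppose there is a finite set ℳ₁ and ν_d > 0 for each d > 0 such that d_{L²}(v(y), ℳ₁) ≥ d implies the slice energy exceeds m₁ + ν_d. If the total renormalized energy ∫_ℝ (½‖v'(y)‖²_{L²} + e(y)) dy is finite, where e(y) ≥ 0 and e(y) ≥ ν_d whenever d_{L²}(v(y),ℳ₁) ≥ d, then there exists q ∈ ℳ₁ such that ‖v(y) - q‖_{L²} → 0 as y → +∞. -/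
open Real Filter MeasureTheory


lemma tail_tendsto {E : ℝ → ℝ} (hEint : Integrable E) :
    Tendsto (fun R => ∫ y in Set.Ioi R, E y) atTop (nhds 0) := by
  have h := tendsto_setIntegral_of_antitone (f := E) (μ := volume)
    (s := fun R : ℝ => Set.Ioi R) (fun R => measurableSet_Ioi)
    (fun a b hab => Set.Ioi_subset_Ioi hab) ⟨0, hEint.integrableOn⟩
  have he : ⋂ R : ℝ, Set.Ioi R = ∅ := by
    ext x
    simp only [Set.mem_iInter, Set.mem_Ioi, Set.mem_empty_iff_false, iff_false, not_forall, not_lt]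
    exact ⟨x, le_rfl⟩
  simpa [he] using h


/-- a finite-energy trajectory `v` with values in `L²(ℝ)²`
converges as `y → +∞` to some element of the finite set `M`.  Here `E y` is the
renormalized slice energy `½‖v'(y)‖² + e(y)`. -/
theorem stmt_10 (v : ℝ → Lp (ℝ × ℝ) 2 (volume : Measure ℝ))
    (M : Set (Lp (ℝ × ℝ) 2 (volume : Measure ℝ)))
    (d₀ : ℝ) (hd₀ : 0 < d₀) (hMfin : M.Finite) (hMne : M.Nonempty)
    (hsep : ∀ p ∈ M, ∀ q ∈ M, p ≠ q → 5 * d₀ ≤ dist p q)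
    (E : ℝ → ℝ) (hEnonneg : ∀ y, 0 ≤ E y) (hEint : Integrable E)
    (hpath : ∀ y₀ y₁ : ℝ, y₀ ≤ y₁ →
      ‖v y₁ - v y₀‖ ^ 2 ≤ 2 * (∫ y in y₀..y₁, E y) * (y₁ - y₀))
    (hcoerc : ∀ d : ℝ, 0 < d → d < 2 * d₀ →
      ∃ ν > 0, ∀ y : ℝ, d ≤ Metric.infDist (v y) M → ν ≤ E y) :
    ∃ q ∈ M, Tendsto (fun y => ‖v y - q‖) atTop (nhds 0) := by
  -- Key lemma: for each d ∈ (0, d₀], eventually ‖v y - q‖ < 2d for some q ∈ M.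
  have key : ∀ d : ℝ, 0 < d → d ≤ d₀ →
      ∃ q ∈ M, ∃ R : ℝ, ∀ y : ℝ, R ≤ y → ‖v y - q‖ < 2 * d := by
    intro d hd hdd₀
    obtain ⟨ν, hν, hνE⟩ := hcoerc d hd (by linarith)
    -- choose R with small tail
    have htail := tail_tendsto hEint
    have hmin : (0 : ℝ) < min ν (d ^ 2 / 8) := lt_min hν (by positivity)
    obtain ⟨R, hR⟩ :=
      ((htail.eventually (gt_mem_nhds hmin)).and (eventually_ge_atTop (0:ℝ))).exists
    have hRtail : ∫ y in Set.Ioi R, E y < min ν (d ^ 2 / 8) := hR.1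
    -- every unit interval beyond R contains a point close to M
    have near : ∀ a : ℝ, R < a → ∃ t ∈ Set.Icc a (a + 1), Metric.infDist (v t) M < d := by
      intro a ha
      by_contra h
      push_neg at h
      have hub : ∀ t ∈ Set.Icc a (a + 1), ν ≤ E t := fun t ht => hνE t (h t ht)
      have h1 : ν ≤ ∫ t in Set.Icc a (a + 1), E t := by
        have hconst : ∫ t in Set.Icc a (a + 1), (ν : ℝ) = ν := by
          simp [Real.volume_Icc]
        calc ν = ∫ t in Set.Icc a (a + 1), (ν : ℝ) := hconst.symm
          _ ≤ ∫ t in Set.Icc a (a + 1), E t :=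
            setIntegral_mono_on (integrableOn_const (by simp [Real.volume_Icc]))
              hEint.integrableOn measurableSet_Icc hub
      have h2 : ∫ t in Set.Icc a (a + 1), E t ≤ ∫ t in Set.Ioi R, E t := by
        apply setIntegral_mono_set hEint.integrableOn
          (Eventually.of_forall fun t => hEnonneg t)
        apply HasSubset.Subset.eventuallyLE
        intro t ht
        exact lt_of_lt_of_le ha ht.1
      have hlt : ν < min ν (d ^ 2 / 8) := lt_of_le_of_lt (le_trans h1 h2) hRtail
      exact absurd hlt (not_lt.2 (min_le_left _ _))
    -- L² movement over short intervals beyond R is small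
    have close : ∀ y₀ y₁ : ℝ, R < y₀ → y₀ ≤ y₁ → y₁ ≤ y₀ + 2 → ‖v y₁ - v y₀‖ ≤ d := by
      intro y₀ y₁ hRy₀ h01 hlen
      have hint : (∫ y in y₀..y₁, E y) ≤ d ^ 2 / 8 := by
        rw [intervalIntegral.integral_of_le h01]
        have h2 : ∫ y in Set.Ioc y₀ y₁, E y ≤ ∫ y in Set.Ioi R, E y := by
          apply setIntegral_mono_set hEint.integrableOn
            (Eventually.of_forall fun t => hEnonneg t)
          apply HasSubset.Subset.eventuallyLE
          intro t ht
          exact lt_trans hRy₀ ht.1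
        exact le_trans h2 (le_of_lt (lt_of_lt_of_le hRtail (min_le_right _ _)))
      have hintnn : 0 ≤ ∫ y in y₀..y₁, E y :=
        intervalIntegral.integral_nonneg h01 (fun y _ => hEnonneg y)
      have hsq : ‖v y₁ - v y₀‖ ^ 2 ≤ d ^ 2 / 2 := by
        have := hpath y₀ y₁ h01
        nlinarith [this, hintnn]
      nlinarith [norm_nonneg (v y₁ - v y₀), hd]
    -- chain of near points
    have hchain : ∀ n : ℕ, ∃ t ∈ Set.Icc (R + 1 + n) (R + 1 + n + 1),
        ∃ p ∈ M, dist (v t) p < d := by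
      intro n
      obtain ⟨t, ht, hlt⟩ := near (R + 1 + n) (by
        have : (0:ℝ) ≤ (n:ℝ) := Nat.cast_nonneg n
        linarith)
      refine ⟨t, ht, ?_⟩
      exact (Metric.infDist_lt_iff hMne).1 hlt
    choose t ht p hpM hdist using hchain
    have hRt : ∀ n : ℕ, R < t n := fun n => by
      have h1 := (ht n).1
      have : (0:ℝ) ≤ (n:ℝ) := Nat.cast_nonneg n
      linarith
    -- consecutive near points have the same nearest element
    have hstep : ∀ n : ℕ, p (n + 1) = p n := by
      intro n
      have h1 := ht n
      have h2 := ht (n + 1)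
      push_cast at h2
      have hle : t n ≤ t (n + 1) := le_trans h1.2 (by linarith [h2.1])
      have hlen : t (n + 1) ≤ t n + 2 := by linarith [h1.1, h2.2]
      have hmov : ‖v (t (n + 1)) - v (t n)‖ ≤ d := close _ _ (hRt n) hle hlen
      have htri : dist (p n) (p (n + 1)) < 3 * d := by
        calc dist (p n) (p (n + 1))
            ≤ dist (p n) (v (t n)) + dist (v (t n)) (v (t (n + 1)))
              + dist (v (t (n + 1))) (p (n + 1)) := dist_triangle4 _ _ _ _
          _ < d + d + d := by
              have e1 : dist (p n) (v (t n)) < d := by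
                rw [dist_comm]; exact hdist n
              have e2 : dist (v (t n)) (v (t (n + 1))) ≤ d := by
                rw [dist_eq_norm, norm_sub_rev]; exact hmov
              have e3 := hdist (n + 1)
              linarith
          _ = 3 * d := by ring
      by_contra hne
      have := hsep (p n) (hpM n) (p (n + 1)) (hpM (n + 1)) (fun h => hne h.symm)
      linarith
    have hconst : ∀ n : ℕ, p n = p 0 := by
      intro n
      induction n with
      | zero => rfl
      | succ k ih => rw [hstep k, ih]
    refine ⟨p 0, hpM 0, R + 2, fun y hy => ?_⟩
    set n : ℕ := ⌊y - (R + 2)⌋₊ with hn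
    have hn1 : (n : ℝ) ≤ y - (R + 2) := Nat.floor_le (by linarith)
    have hn2 : y - (R + 2) < n + 1 := Nat.lt_floor_add_one _
    have h1 := ht n
    have hle : t n ≤ y := le_trans h1.2 (by linarith)
    have hlen : y ≤ t n + 2 := by linarith [h1.1]
    have hmov : ‖v y - v (t n)‖ ≤ d := close _ _ (hRt n) hle hlen
    have : dist (v y) (p 0) < 2 * d := by
      calc dist (v y) (p 0) ≤ dist (v y) (v (t n)) + dist (v (t n)) (p n) := by
            rw [hconst n]; exact dist_triangle _ _ _
        _ < d + d := by
            have e1 : dist (v y) (v (t n)) ≤ d := by rw [dist_eq_norm]; exact hmov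
            linarith [hdist n]
        _ = 2 * d := by ring
    rw [← dist_eq_norm]
    exact this
  -- conclude
  obtain ⟨q, hqM, R₁, h₁⟩ := key d₀ hd₀ le_rfl
  refine ⟨q, hqM, ?_⟩
  rw [Metric.tendsto_atTop]
  intro ε hε
  have hdpos : 0 < min (ε / 3) d₀ := lt_min (by linarith) hd₀
  obtain ⟨q', hq'M, R₂, h₂⟩ := key (min (ε / 3) d₀) hdpos (min_le_right _ _)
  have hqq : q = q' := by
    by_contra hne
    set y := max R₁ R₂
    have e1 : ‖v y - q‖ < 2 * d₀ := h₁ y (le_max_left _ _)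
    have e2 : ‖v y - q'‖ < 2 * min (ε / 3) d₀ := h₂ y (le_max_right _ _)
    have htri : dist q q' ≤ ‖v y - q‖ + ‖v y - q'‖ := by
      calc dist q q' ≤ dist q (v y) + dist (v y) q' := dist_triangle _ _ _
        _ = ‖v y - q‖ + ‖v y - q'‖ := by rw [dist_comm q (v y), dist_eq_norm, dist_eq_norm]
    have := hsep q hqM q' hq'M hne
    have hmin : min (ε / 3) d₀ ≤ d₀ := min_le_right _ _
    linarith
  refine ⟨R₂, fun y hy => ?_⟩
  have e2 : ‖v y - q‖ < 2 * min (ε / 3) d₀ := hqq ▸ h₂ y hy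
  have hmin : min (ε / 3) d₀ ≤ ε / 3 := min_le_left _ _
  rw [Real.dist_eq, sub_zero, abs_of_nonneg (norm_nonneg _)]
  linarith
end
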